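/- Let C be a nonempty closed convex subset of ℝ^K with diameter F := max_{x,y∈C} ‖x−y‖ < ∞. Let h_1, h_2, … be convex differentiable functions on C with ‖∇h_t(x)‖ ≤ H for all x ∈ C and all t. Define the online projected gradient iterates x_1 ∈ C and x_{t} = Π_C[x_{t−1} − (1/√(t−1)) ∇h_{t−1}(x_{t−1})] for t ≥ 2, where Π_C is the Euclidean projection onto C. Then for all T, the regret satisfies Σ_{t=1}^T h_t(x_t) − min_{x∈C} Σ_{t=1}^T h_t(x) ≤ (F²/2 + H²) √T. -/

import Mathlib

open RealInnerProductSpace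

section Aux

variable {n : ℕ}

/-- Gradient inequality for convex functions. -/
lemma aux_grad_ineq {C : Set (EuclideanSpace ℝ (Fin n))}
    {f : EuclideanSpace ℝ (Fin n) → ℝ} {gr u z : EuclideanSpace ℝ (Fin n)}
    (hf : ConvexOn ℝ C f) (hg : HasGradientAt f gr u) (hu : u ∈ C) (hz : z ∈ C) :
    f u - f z ≤ ⟪gr, u - z⟫ := by
  set A : ℝ →ᵃ[ℝ] EuclideanSpace ℝ (Fin n) := AffineMap.lineMap u z with hA
  have hφ : ConvexOn ℝ (A ⁻¹' C) (f ∘ A) := hf.comp_affineMap A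
  have h0 : (0 : ℝ) ∈ A ⁻¹' C := by
    simp only [Set.mem_preimage, hA, AffineMap.lineMap_apply_zero]; exact hu
  have h1 : (1 : ℝ) ∈ A ⁻¹' C := by
    simp only [Set.mem_preimage, hA, AffineMap.lineMap_apply_one]; exact hz
  have hc : HasDerivAt (fun θ : ℝ => A θ) (z - u) 0 := by
    have : HasDerivAt (fun θ : ℝ => θ • (z - u) + u) ((1 : ℝ) • (z - u)) 0 :=
      ((hasDerivAt_id (0 : ℝ)).smul_const (z - u)).add_const u
    rw [one_smul] at this
    have heq : (fun θ : ℝ => A θ) = fun θ : ℝ => θ • (z - u) + u := by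
      funext θ
      simp only [hA, AffineMap.lineMap_apply_module]
      module
    rw [heq]
    exact this
  have hF : HasFDerivAt f (InnerProductSpace.toDual ℝ _ gr) (A 0) := by
    rw [show A 0 = u by simp [hA]]
    exact hg.hasFDerivAt
  have hderiv : HasDerivAt (f ∘ A) ⟪gr, z - u⟫ 0 := by
    have := hF.comp_hasDerivAt 0 hc
    simpa using this
  have hslope := hφ.le_slope_of_hasDerivAt h0 h1 zero_lt_one hderiv
  rw [slope_def_field] at hslope
  simp only [Function.comp_apply, hA, AffineMap.lineMap_apply_one,
    AffineMap.lineMap_apply_zero] at hslope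
  have : ⟪gr, z - u⟫ ≤ f z - f u := by
    rw [sub_zero, div_one] at hslope
    exact hslope
  have hneg : ⟪gr, u - z⟫ = -⟪gr, z - u⟫ := by
    rw [show u - z = -(z - u) by abel, inner_neg_right]
  linarith [hneg ▸ neg_le_neg this]

/-- Nonexpansiveness of the projection toward points of `C`. -/
lemma aux_proj {C : Set (EuclideanSpace ℝ (Fin n))}
    (hne : C.Nonempty) (hconv : Convex ℝ C)
    (proj : EuclideanSpace ℝ (Fin n) → EuclideanSpace ℝ (Fin n))
    (hproj : ∀ z, proj z ∈ C ∧ ∀ y ∈ C, ‖z - proj z‖ ≤ ‖z - y‖)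
    (v : EuclideanSpace ℝ (Fin n)) {y : EuclideanSpace ℝ (Fin n)} (hy : y ∈ C) :
    ‖proj v - y‖ ≤ ‖v - y‖ := by
  haveI : Nonempty C := hne.to_subtype
  have hmem := (hproj v).1
  have hbdd : BddBelow (Set.range fun w : C => ‖v - (w : EuclideanSpace ℝ (Fin n))‖) := by
    refine ⟨0, ?_⟩
    rintro r ⟨w, rfl⟩
    exact norm_nonneg _
  have hinf : ‖v - proj v‖ = ⨅ w : C, ‖v - (w : EuclideanSpace ℝ (Fin n))‖ := by
    refine le_antisymm (le_ciInf fun w => (hproj v).2 w w.2) ?_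
    exact ciInf_le hbdd ⟨proj v, hmem⟩
  have hvar : ⟪v - proj v, y - proj v⟫ ≤ 0 :=
    (norm_eq_iInf_iff_real_inner_le_zero hconv hmem).1 hinf y hy
  have hdecomp : v - y = (v - proj v) + (proj v - y) := by abel
  have hexp : ‖v - y‖ ^ 2 = ‖v - proj v‖ ^ 2 + 2 * ⟪v - proj v, proj v - y⟫
      + ‖proj v - y‖ ^ 2 := by
    rw [hdecomp, norm_add_sq_real]
  have hflip : ⟪v - proj v, proj v - y⟫ = -⟪v - proj v, y - proj v⟫ := by
    rw [show proj v - y = -(y - proj v) by abel, inner_neg_right]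
  have hsq : ‖proj v - y‖ ^ 2 ≤ ‖v - y‖ ^ 2 := by
    nlinarith [sq_nonneg ‖v - proj v‖]
  have := Real.sqrt_le_sqrt hsq
  rwa [Real.sqrt_sq (norm_nonneg _), Real.sqrt_sq (norm_nonneg _)] at this

/-- The step-size sum bound `∑ 1/√t ≤ 2√T`. -/
lemma aux_sum_sqrt : ∀ T : ℕ, ∑ t ∈ Finset.Icc 1 T, 1 / Real.sqrt t ≤ 2 * Real.sqrt T := by
  intro T
  induction T with
  | zero => simp
  | succ T ih =>
    rw [Finset.sum_Icc_succ_top (by omega : 1 ≤ T + 1)]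
    have ha : (0 : ℝ) ≤ Real.sqrt T := Real.sqrt_nonneg _
    have hb : (1 : ℝ) ≤ Real.sqrt (T + 1 : ℕ) := by
      rw [show ((T + 1 : ℕ) : ℝ) = (T : ℝ) + 1 by push_cast; ring]
      have h1 := Real.sqrt_le_sqrt (show (1:ℝ) ≤ (T : ℝ) + 1 by
        linarith [Nat.cast_nonneg (α := ℝ) T])
      rwa [Real.sqrt_one] at h1
    have ha2 : Real.sqrt T ^ 2 = (T : ℝ) := Real.sq_sqrt (Nat.cast_nonneg T)
    have hb2 : Real.sqrt (T + 1 : ℕ) ^ 2 = (T : ℝ) + 1 := by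
      rw [show ((T + 1 : ℕ) : ℝ) = (T : ℝ) + 1 by push_cast; ring] at *
      exact Real.sq_sqrt (by linarith [Nat.cast_nonneg (α := ℝ) T])
    have hkey : 1 / Real.sqrt (T + 1 : ℕ) ≤ 2 * Real.sqrt (T + 1 : ℕ) - 2 * Real.sqrt T := by
      rw [div_le_iff₀ (by linarith)]
      nlinarith [sq_nonneg (Real.sqrt T * Real.sqrt (T + 1 : ℕ) - ((T : ℝ) + 1 / 2)),
        mul_nonneg ha (by linarith : (0:ℝ) ≤ Real.sqrt (T + 1 : ℕ))]
    linarith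

end Aux

/-- Zinkevich's online projected gradient descent regret bound: with diameter `F`,
gradient bound `H` and step sizes `1/√t`, the regret after `T` rounds is at most
`(F²/2 + H²)√T`. -/
theorem stmt_7 {K : ℕ} (C : Set (EuclideanSpace ℝ (Fin K)))
    (hne : C.Nonempty) (hclosed : IsClosed C) (hconv : Convex ℝ C)
    (F H : ℝ)
    (hF : ∀ x ∈ C, ∀ y ∈ C, ‖x - y‖ ≤ F)
    (h : ℕ → EuclideanSpace ℝ (Fin K) → ℝ)
    (g : ℕ → EuclideanSpace ℝ (Fin K) → EuclideanSpace ℝ (Fin K))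
    (hconvex : ∀ t, ConvexOn ℝ C (h t))
    (hgrad : ∀ t, ∀ x ∈ C, HasGradientAt (h t) (g t x) x)
    (hH : ∀ t, ∀ x ∈ C, ‖g t x‖ ≤ H)
    (proj : EuclideanSpace ℝ (Fin K) → EuclideanSpace ℝ (Fin K))
    (hproj : ∀ z, proj z ∈ C ∧ ∀ y ∈ C, ‖z - proj z‖ ≤ ‖z - y‖)
    (x : ℕ → EuclideanSpace ℝ (Fin K)) (hx1 : x 1 ∈ C)
    (hxt : ∀ t : ℕ, 2 ≤ t →
      x t = proj (x (t - 1) - (1 / Real.sqrt (t - 1 : ℕ)) • g (t - 1) (x (t - 1)))) :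
    ∀ T : ℕ, ∀ z ∈ C,
      ∑ t ∈ Finset.Icc 1 T, h t (x t) - ∑ t ∈ Finset.Icc 1 T, h t z ≤
        (F ^ 2 / 2 + H ^ 2) * Real.sqrt T := by
  intro T z hz
  have xmem : ∀ t : ℕ, 1 ≤ t → x t ∈ C := by
    intro t ht
    rcases eq_or_lt_of_le ht with h1 | h2
    · rw [← h1]; exact hx1
    · rw [hxt t (by omega)]; exact (hproj _).1
  -- per-step bound
  have key : ∀ t : ℕ, 1 ≤ t →
      h t (x t) - h t z ≤ Real.sqrt t / 2 * (‖x t - z‖ ^ 2 - ‖x (t + 1) - z‖ ^ 2)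
        + H ^ 2 / 2 * (1 / Real.sqrt t) := by
    intro t ht
    have hst : (0 : ℝ) < Real.sqrt t := Real.sqrt_pos.2 (by
      exact_mod_cast Nat.pos_of_ne_zero (by omega))
    set u := x t with hu_def
    set G := g t u with hG_def
    set η : ℝ := 1 / Real.sqrt t with hη_def
    have hu : u ∈ C := xmem t ht
    have hηpos : 0 < η := by positivity
    have hη : η * Real.sqrt t = 1 := by
      rw [hη_def]; field_simp
    have hx' : x (t + 1) = proj (u - η • G) := by
      show x (t + 1) = proj (x t - (1 / Real.sqrt t) • g t (x t))
      have h2 := hxt (t + 1) (by omega)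
      simp only [Nat.add_sub_cancel] at h2
      exact h2
    have hstep : ‖x (t + 1) - z‖ ≤ ‖u - η • G - z‖ := by
      rw [hx']
      exact aux_proj hne hconv proj hproj (u - η • G) hz
    have hdecomp : u - η • G - z = (u - z) + (-(η • G)) := by abel
    have hexp : ‖u - η • G - z‖ ^ 2
        = ‖u - z‖ ^ 2 - 2 * η * ⟪G, u - z⟫ + η ^ 2 * ‖G‖ ^ 2 := by
      rw [hdecomp, norm_add_sq_real, inner_neg_right, real_inner_smul_right,
        norm_neg, norm_smul, real_inner_comm G (u - z)]
      rw [Real.norm_eq_abs, abs_of_pos hηpos]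
      ring
    have hG2 : ‖G‖ ^ 2 ≤ H ^ 2 := by
      nlinarith [hH t u hu, norm_nonneg G]
    have hgradineq : h t u - h t z ≤ ⟪G, u - z⟫ :=
      aux_grad_ineq (hconvex t) (hgrad t u hu) hu hz
    have hsq : ‖x (t + 1) - z‖ ^ 2 ≤ ‖u - z‖ ^ 2 - 2 * η * ⟪G, u - z⟫
        + η ^ 2 * ‖G‖ ^ 2 := by
      nlinarith [norm_nonneg (x (t + 1) - z), norm_nonneg (u - η • G - z), hstep, hexp]
    have hmul : (2 * η) * ⟪G, u - z⟫
        ≤ (2 * η) * (Real.sqrt t / 2 * (‖u - z‖ ^ 2 - ‖x (t + 1) - z‖ ^ 2)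
          + H ^ 2 / 2 * η) := by
      have expand : (2 * η) * (Real.sqrt t / 2 * (‖u - z‖ ^ 2 - ‖x (t + 1) - z‖ ^ 2)
          + H ^ 2 / 2 * η)
          = (η * Real.sqrt t) * (‖u - z‖ ^ 2 - ‖x (t + 1) - z‖ ^ 2) + H ^ 2 * η ^ 2 := by
        ring
      rw [expand, hη, one_mul]
      nlinarith [mul_le_mul_of_nonneg_left hG2 (sq_nonneg η)]
    have hfinal : ⟪G, u - z⟫
        ≤ Real.sqrt t / 2 * (‖u - z‖ ^ 2 - ‖x (t + 1) - z‖ ^ 2) + H ^ 2 / 2 * η :=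
      (mul_le_mul_iff_right₀ (by positivity : (0:ℝ) < 2 * η)).1 hmul
    rw [hη_def] at hfinal
    linarith
  -- the main induction
  have main : ∀ S : ℕ, ∑ t ∈ Finset.Icc 1 S, (h t (x t) - h t z)
      ≤ F ^ 2 / 2 * Real.sqrt S - Real.sqrt S / 2 * ‖x (S + 1) - z‖ ^ 2
        + H ^ 2 / 2 * ∑ t ∈ Finset.Icc 1 S, (1 / Real.sqrt t) := by
    intro S
    induction S with
    | zero => simp
    | succ S ih =>
      rw [Finset.sum_Icc_succ_top (by omega : 1 ≤ S + 1),
        Finset.sum_Icc_succ_top (by omega : 1 ≤ S + 1)]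
      have hk := key (S + 1) (by omega)
      have hD : ‖x (S + 1) - z‖ ^ 2 ≤ F ^ 2 := by
        have h1 := hF (x (S + 1)) (xmem (S + 1) (by omega)) z hz
        nlinarith [norm_nonneg (x (S + 1) - z)]
      have hmono : Real.sqrt S ≤ Real.sqrt (S + 1 : ℕ) := by
        apply Real.sqrt_le_sqrt
        push_cast
        linarith
      have hprod : (Real.sqrt (S + 1 : ℕ) - Real.sqrt S) * ‖x (S + 1) - z‖ ^ 2
          ≤ (Real.sqrt (S + 1 : ℕ) - Real.sqrt S) * F ^ 2 :=
        mul_le_mul_of_nonneg_left hD (by linarith)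
      push_cast at hk ih hmono hprod ⊢
      linarith
  have hS := aux_sum_sqrt T
  have hnn : 0 ≤ Real.sqrt T / 2 * ‖x (T + 1) - z‖ ^ 2 := by positivity
  have hmain := main T
  rw [← Finset.sum_sub_distrib]
  nlinarith [sq_nonneg H, hS, hnn, hmain, Real.sqrt_nonneg (T : ℝ)]
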